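/- (Stable decomposition for GenEO with inexact coarse solve) In addition to the hypotheses: ∑_{i=1}^N R_iᵀ D_i R_i = I; ‖∑_{i=1}^N R_iᵀ U_i‖_A² ≤ k₀ ∑_{i=1}^N ‖R_iᵀ U_i‖_A² for all U_i; ∑_{j=1}^N ⟨R_j A R_jᵀ D_j (I − π̃_j) R_j U, D_j (I − π̃_j) R_j U⟩ ≤ k₁ τ ⟨A U, U⟩ for all U; assume range(R_jᵀ D_j π̃_j) ⊆ V₀ for every j, and μ′ ⟨Ẽ u, u⟩ ≤ ⟨E u, u⟩ for all u ∈ ℝᵐ for some μ′ > 0. Let ε_A := ‖P₀ − P̃₀‖_A and c_T := μ′ / ( (1 + ε_A √(k₀ k₁ τ))² + μ′ k₁ τ ). Then for every U ∈ ℝⁿ there exist U₀ ∈ ℝᵐ and U_i ∈ ℝ^{n_i} (namely U_i = D_i (I − π̃_i) R_i U) such that U = Z U₀ + (I − P̃₀) ∑_{i=1}^N R_iᵀ U_i and c_T ( ⟨Ẽ U₀, U₀⟩ + ∑_{i=1}^N ⟨R_i A R_iᵀ U_i, U_i⟩ ) ≤ ⟨A U, U⟩. -/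

import Mathlib

open Matrix

/-- The norm induced by an SPD matrix `A`: `‖x‖_A = √(⟨A x, x⟩)`. -/
noncomputable def aNorm {n : ℕ} (A : Matrix (Fin n) (Fin n) ℝ) (x : Fin n → ℝ) : ℝ :=
  Real.sqrt ((A *ᵥ x) ⬝ᵥ x)

/-- The operator norm of a matrix `M` induced by the `A`-norm. -/
noncomputable def aOpNorm {n : ℕ} (A M : Matrix (Fin n) (Fin n) ℝ) : ℝ :=
  sSup { t : ℝ | ∃ x : Fin n → ℝ, x ≠ 0 ∧ t = aNorm A (M *ᵥ x) / aNorm A x }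

variable {n : ℕ}

lemma q_nonneg {A : Matrix (Fin n) (Fin n) ℝ} (hA : A.PosSemidef) (x : Fin n → ℝ) :
    0 ≤ (A *ᵥ x) ⬝ᵥ x := by
  rw [dotProduct_comm]
  simpa using hA.dotProduct_mulVec_nonneg x

lemma q_pos {A : Matrix (Fin n) (Fin n) ℝ} (hA : A.PosDef) {x : Fin n → ℝ} (hx : x ≠ 0) :
    0 < (A *ᵥ x) ⬝ᵥ x := by
  rw [dotProduct_comm]
  simpa using hA.dotProduct_mulVec_pos hx

lemma symm_dot {A : Matrix (Fin n) (Fin n) ℝ} (hA : A.IsHermitian) (x y : Fin n → ℝ) :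
    (A *ᵥ x) ⬝ᵥ y = (A *ᵥ y) ⬝ᵥ x := by
  have hAs : Aᵀ = A := by simpa [Matrix.IsHermitian, conjTranspose_eq_transpose_of_trivial] using hA.eq
  rw [dotProduct_comm, dotProduct_mulVec, ← mulVec_transpose, hAs]

/-- Cauchy-Schwarz for the bilinear form of a PSD Hermitian real matrix. -/
lemma q_cs {A : Matrix (Fin n) (Fin n) ℝ} (hA : A.PosSemidef) (x y : Fin n → ℝ) :
    ((A *ᵥ x) ⬝ᵥ y) ^ 2 ≤ ((A *ᵥ x) ⬝ᵥ x) * ((A *ᵥ y) ⬝ᵥ y) := by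
  have key : ∀ t : ℝ, 0 ≤ ((A *ᵥ y) ⬝ᵥ y) * (t * t)
      + (2 * ((A *ᵥ x) ⬝ᵥ y)) * t + ((A *ᵥ x) ⬝ᵥ x) := by
    intro t
    have h0 := q_nonneg hA (x + t • y)
    have hsymm := symm_dot hA.1 x y
    have hexp : (A *ᵥ (x + t • y)) ⬝ᵥ (x + t • y)
        = ((A *ᵥ y) ⬝ᵥ y) * (t * t) + (2 * ((A *ᵥ x) ⬝ᵥ y)) * t + ((A *ᵥ x) ⬝ᵥ x) := by
      simp only [mulVec_add, mulVec_smul, add_dotProduct, smul_dotProduct, dotProduct_add,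
        dotProduct_smul, smul_eq_mul]
      linear_combination (-t) * hsymm
    linarith [hexp ▸ h0]
  have hd := discrim_le_zero key
  rw [discrim] at hd
  nlinarith [hd]

lemma q_expand {A : Matrix (Fin n) (Fin n) ℝ} (hA : A.IsHermitian) (x y : Fin n → ℝ) :
    (A *ᵥ (x + y)) ⬝ᵥ (x + y)
      = ((A *ᵥ x) ⬝ᵥ x) + 2 * ((A *ᵥ x) ⬝ᵥ y) + ((A *ᵥ y) ⬝ᵥ y) := by
  have hsymm := symm_dot hA x y
  simp only [mulVec_add, add_dotProduct, dotProduct_add]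
  linarith [hsymm]

lemma sqrt_q_triangle {A : Matrix (Fin n) (Fin n) ℝ} (hA : A.PosSemidef) (x y : Fin n → ℝ) :
    Real.sqrt ((A *ᵥ (x + y)) ⬝ᵥ (x + y))
      ≤ Real.sqrt ((A *ᵥ x) ⬝ᵥ x) + Real.sqrt ((A *ᵥ y) ⬝ᵥ y) := by
  have hx := q_nonneg hA x
  have hy := q_nonneg hA y
  have hcs := q_cs hA x y
  have hdot : (A *ᵥ x) ⬝ᵥ y ≤ Real.sqrt ((A *ᵥ x) ⬝ᵥ x) * Real.sqrt ((A *ᵥ y) ⬝ᵥ y) := by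
    have h1 : (A *ᵥ x) ⬝ᵥ y ≤ |((A *ᵥ x) ⬝ᵥ y)| := le_abs_self _
    have h2 : |((A *ᵥ x) ⬝ᵥ y)| = Real.sqrt (((A *ᵥ x) ⬝ᵥ y) ^ 2) := by
      rw [Real.sqrt_sq_eq_abs]
    rw [h2] at h1
    refine h1.trans ?_
    rw [← Real.sqrt_mul hx]
    exact Real.sqrt_le_sqrt hcs
  rw [q_expand hA.1]
  have hsum : ((A *ᵥ x) ⬝ᵥ x) + 2 * ((A *ᵥ x) ⬝ᵥ y) + ((A *ᵥ y) ⬝ᵥ y)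
      ≤ (Real.sqrt ((A *ᵥ x) ⬝ᵥ x) + Real.sqrt ((A *ᵥ y) ⬝ᵥ y)) ^ 2 := by
    have e1 : Real.sqrt ((A *ᵥ x) ⬝ᵥ x) ^ 2 = (A *ᵥ x) ⬝ᵥ x := Real.sq_sqrt hx
    have e2 : Real.sqrt ((A *ᵥ y) ⬝ᵥ y) ^ 2 = (A *ᵥ y) ⬝ᵥ y := Real.sq_sqrt hy
    nlinarith [hdot]
  calc Real.sqrt (((A *ᵥ x) ⬝ᵥ x) + 2 * ((A *ᵥ x) ⬝ᵥ y) + ((A *ᵥ y) ⬝ᵥ y))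
      ≤ Real.sqrt ((Real.sqrt ((A *ᵥ x) ⬝ᵥ x) + Real.sqrt ((A *ᵥ y) ⬝ᵥ y)) ^ 2) :=
        Real.sqrt_le_sqrt hsum
    _ = Real.sqrt ((A *ᵥ x) ⬝ᵥ x) + Real.sqrt ((A *ᵥ y) ⬝ᵥ y) := by
        rw [Real.sqrt_sq (by positivity)]

lemma ent_bound (B : Matrix (Fin n) (Fin n) ℝ) (x : Fin n → ℝ) :
    (B *ᵥ x) ⬝ᵥ x ≤ (∑ i, ∑ j, |B i j|) * (x ⬝ᵥ x) := by
  have hs : 0 ≤ x ⬝ᵥ x := by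
    simp only [dotProduct]
    exact Finset.sum_nonneg fun k _ => mul_self_nonneg _
  have hx2 : ∀ i, (x i) ^ 2 ≤ x ⬝ᵥ x := by
    intro i
    have : x ⬝ᵥ x = ∑ k, (x k) ^ 2 := by simp [dotProduct, sq]
    rw [this]
    exact Finset.single_le_sum (f := fun k => (x k) ^ 2) (fun k _ => sq_nonneg _) (Finset.mem_univ i)
  have habs : ∀ i j : Fin n, |x i| * |x j| ≤ x ⬝ᵥ x := by
    intro i j
    have h1 : |x i| ^ 2 ≤ x ⬝ᵥ x := by rw [sq_abs]; exact hx2 i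
    have h2 : |x j| ^ 2 ≤ x ⬝ᵥ x := by rw [sq_abs]; exact hx2 j
    nlinarith [abs_nonneg (x i), abs_nonneg (x j)]
  have hexp : (B *ᵥ x) ⬝ᵥ x = ∑ i, ∑ j, B i j * x j * x i := by
    simp only [dotProduct, mulVec]
    exact Finset.sum_congr rfl fun i _ => Finset.sum_mul _ _ _
  rw [hexp, Finset.sum_mul]
  refine Finset.sum_le_sum fun i _ => ?_
  rw [Finset.sum_mul]
  refine Finset.sum_le_sum fun j _ => ?_
  calc B i j * x j * x i ≤ |B i j * x j * x i| := le_abs_self _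
    _ = |B i j| * (|x j| * |x i|) := by rw [abs_mul, abs_mul, mul_assoc]
    _ ≤ |B i j| * (x ⬝ᵥ x) := by
        refine mul_le_mul_of_nonneg_left ?_ (abs_nonneg _)
        rw [mul_comm]
        exact habs i j

lemma q_lower {A : Matrix (Fin n) (Fin n) ℝ} (hA : A.PosDef) (x : Fin n → ℝ) :
    x ⬝ᵥ x ≤ (∑ i, ∑ j, |A⁻¹ i j|) * ((A *ᵥ x) ⬝ᵥ x) := by
  by_cases hx : x = 0
  · simp [hx]
  · have hdet : IsUnit A.det := isUnit_iff_ne_zero.mpr hA.det_pos.ne'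
    set y := A⁻¹ *ᵥ x with hy
    have hAy : A *ᵥ y = x := by
      rw [hy, mulVec_mulVec, Matrix.mul_nonsing_inv A hdet, one_mulVec]
    have hcs := q_cs hA.posSemidef y x
    have hQy : x ⬝ᵥ y ≤ (∑ i, ∑ j, |A⁻¹ i j|) * (x ⬝ᵥ x) := by
      rw [hy, dotProduct_comm]
      exact ent_bound A⁻¹ x
    have hs : 0 < x ⬝ᵥ x := by
      have : x ⬝ᵥ x = ∑ k, (x k) ^ 2 := by simp [dotProduct, sq]
      rw [this]
      have hne : ∃ k, x k ≠ 0 := by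
        by_contra h
        push_neg at h
        exact hx (funext h)
      obtain ⟨k, hk⟩ := hne
      exact Finset.sum_pos' (fun i _ => sq_nonneg _)
        ⟨k, Finset.mem_univ k, by positivity⟩
    have hQx : 0 ≤ (A *ᵥ x) ⬝ᵥ x := q_nonneg hA.posSemidef x
    rw [hAy] at hcs
    nlinarith [hcs, hs, hQx, mul_le_mul_of_nonneg_right hQy hQx]

lemma aNorm_nonneg (A : Matrix (Fin n) (Fin n) ℝ) (x : Fin n → ℝ) : 0 ≤ aNorm A x :=
  Real.sqrt_nonneg _

set_option maxHeartbeats 1000000 in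
lemma exists_opBound {A : Matrix (Fin n) (Fin n) ℝ} (hA : A.PosDef)
    (M : Matrix (Fin n) (Fin n) ℝ) :
    ∃ C : ℝ, 0 ≤ C ∧ ∀ x : Fin n → ℝ, aNorm A (M *ᵥ x) ≤ C * aNorm A x := by
  set CA := ∑ i, ∑ j, |A i j| with hCA
  set CM := ∑ i, ∑ j, |(Mᵀ * M) i j| with hCM
  set CI := ∑ i, ∑ j, |A⁻¹ i j| with hCI
  have hCA0 : 0 ≤ CA := Finset.sum_nonneg fun i _ => Finset.sum_nonneg fun j _ => abs_nonneg _
  have hCM0 : 0 ≤ CM := Finset.sum_nonneg fun i _ => Finset.sum_nonneg fun j _ => abs_nonneg _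
  have hCI0 : 0 ≤ CI := Finset.sum_nonneg fun i _ => Finset.sum_nonneg fun j _ => abs_nonneg _
  refine ⟨Real.sqrt (CA * CM * CI), Real.sqrt_nonneg _, fun x => ?_⟩
  have h1 : (A *ᵥ (M *ᵥ x)) ⬝ᵥ (M *ᵥ x) ≤ CA * ((M *ᵥ x) ⬝ᵥ (M *ᵥ x)) := ent_bound A _
  have h2 : (M *ᵥ x) ⬝ᵥ (M *ᵥ x) ≤ CM * (x ⬝ᵥ x) := by
    have : ((Mᵀ * M) *ᵥ x) ⬝ᵥ x = (M *ᵥ x) ⬝ᵥ (M *ᵥ x) := by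
      rw [← mulVec_mulVec, dotProduct_comm, dotProduct_mulVec, ← mulVec_transpose,
        transpose_transpose]
    rw [← this]
    exact ent_bound _ x
  have h3 : x ⬝ᵥ x ≤ CI * ((A *ᵥ x) ⬝ᵥ x) := q_lower hA x
  have hMx : 0 ≤ (M *ᵥ x) ⬝ᵥ (M *ᵥ x) := by
    simp only [dotProduct]
    exact Finset.sum_nonneg fun k _ => mul_self_nonneg _
  have hQx : 0 ≤ (A *ᵥ x) ⬝ᵥ x := q_nonneg hA.posSemidef x
  have key : (A *ᵥ (M *ᵥ x)) ⬝ᵥ (M *ᵥ x) ≤ (CA * CM * CI) * ((A *ᵥ x) ⬝ᵥ x) := by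
    calc (A *ᵥ (M *ᵥ x)) ⬝ᵥ (M *ᵥ x) ≤ CA * ((M *ᵥ x) ⬝ᵥ (M *ᵥ x)) := h1
      _ ≤ CA * (CM * (x ⬝ᵥ x)) := mul_le_mul_of_nonneg_left h2 hCA0
      _ ≤ CA * (CM * (CI * ((A *ᵥ x) ⬝ᵥ x))) := by
          refine mul_le_mul_of_nonneg_left (mul_le_mul_of_nonneg_left h3 hCM0) hCA0
      _ = (CA * CM * CI) * ((A *ᵥ x) ⬝ᵥ x) := by ring
  simp only [aNorm]
  calc Real.sqrt ((A *ᵥ (M *ᵥ x)) ⬝ᵥ (M *ᵥ x))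
      ≤ Real.sqrt ((CA * CM * CI) * ((A *ᵥ x) ⬝ᵥ x)) := Real.sqrt_le_sqrt key
    _ = Real.sqrt (CA * CM * CI) * Real.sqrt ((A *ᵥ x) ⬝ᵥ x) :=
        Real.sqrt_mul (by positivity) _

lemma aNorm_zero (A : Matrix (Fin n) (Fin n) ℝ) : aNorm A 0 = 0 := by
  simp [aNorm]

lemma ratioSet_bddAbove {A : Matrix (Fin n) (Fin n) ℝ} (hA : A.PosDef)
    (M : Matrix (Fin n) (Fin n) ℝ) :
    BddAbove { t : ℝ | ∃ x : Fin n → ℝ, x ≠ 0 ∧ t = aNorm A (M *ᵥ x) / aNorm A x } := by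
  obtain ⟨C, hC0, hC⟩ := exists_opBound hA M
  refine ⟨C, fun t ht => ?_⟩
  obtain ⟨x, hx, rfl⟩ := ht
  have hpos : 0 < aNorm A x := Real.sqrt_pos.mpr (q_pos hA hx)
  rw [div_le_iff₀ hpos]
  exact hC x

lemma aNorm_mulVec_le {A : Matrix (Fin n) (Fin n) ℝ} (hA : A.PosDef)
    (M : Matrix (Fin n) (Fin n) ℝ) (x : Fin n → ℝ) :
    aNorm A (M *ᵥ x) ≤ aOpNorm A M * aNorm A x := by
  by_cases hx : x = 0
  · simp [hx, aNorm_zero, mulVec_zero]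
  · have hpos : 0 < aNorm A x := Real.sqrt_pos.mpr (q_pos hA hx)
    have hmem : aNorm A (M *ᵥ x) / aNorm A x
        ∈ { t : ℝ | ∃ x : Fin n → ℝ, x ≠ 0 ∧ t = aNorm A (M *ᵥ x) / aNorm A x } :=
      ⟨x, hx, rfl⟩
    have hle := le_csSup (ratioSet_bddAbove hA M) hmem
    rw [div_le_iff₀ hpos] at hle
    exact hle

lemma aOpNorm_nonneg {A : Matrix (Fin n) (Fin n) ℝ} (hA : A.PosDef)
    (M : Matrix (Fin n) (Fin n) ℝ) : 0 ≤ aOpNorm A M := by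
  unfold aOpNorm
  by_cases hS : { t : ℝ | ∃ x : Fin n → ℝ, x ≠ 0 ∧ t = aNorm A (M *ᵥ x) / aNorm A x }.Nonempty
  · obtain ⟨t, ht⟩ := hS
    obtain ⟨x, hx, rfl⟩ := ht
    refine le_trans (div_nonneg (aNorm_nonneg A _) (aNorm_nonneg A _))
      (le_csSup (ratioSet_bddAbove hA M) ⟨x, hx, rfl⟩)
  · rw [Set.not_nonempty_iff_eq_empty] at hS
    rw [hS, Real.sSup_empty]

lemma E_posDef {m : ℕ} {A : Matrix (Fin n) (Fin n) ℝ} (hA : A.PosDef)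
    {Z : Matrix (Fin n) (Fin m) ℝ} (hZ : LinearIndependent ℝ Zᵀ) :
    (Zᵀ * A * Z).PosDef := by
  have hmv : ∀ u : Fin m → ℝ, Z *ᵥ u = ∑ i, u i • Zᵀ i := by
    intro u
    funext j
    simp [mulVec, dotProduct, Finset.sum_apply, mul_comm]
  have hinj : ∀ u : Fin m → ℝ, u ≠ 0 → Z *ᵥ u ≠ 0 := by
    intro u hu hzu
    apply hu
    rw [hmv] at hzu
    have := Fintype.linearIndependent_iff.mp hZ u hzu
    funext i
    exact this i
  refine Matrix.PosDef.of_dotProduct_mulVec_pos ?_ ?_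
  · have h1 : (Zᵀ * A * Z).PosSemidef := by
      have := hA.posSemidef.conjTranspose_mul_mul_same Z
      rwa [conjTranspose_eq_transpose_of_trivial] at this
    exact h1.1
  · intro u hu
    have hne := hinj u hu
    have hpos := hA.dotProduct_mulVec_pos hne
    simp only [star_trivial] at hpos ⊢
    have : u ⬝ᵥ ((Zᵀ * A * Z) *ᵥ u) = (Z *ᵥ u) ⬝ᵥ (A *ᵥ (Z *ᵥ u)) := by
      rw [← mulVec_mulVec, ← mulVec_mulVec, dotProduct_mulVec, vecMul_transpose]
    rw [this]
    exact hpos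

lemma sum_mulVec' {ι : Type*} (s : Finset ι) (M : ι → Matrix (Fin n) (Fin n) ℝ)
    (v : Fin n → ℝ) : (∑ i ∈ s, M i) *ᵥ v = ∑ i ∈ s, M i *ᵥ v := by
  induction s using Finset.cons_induction with
  | empty => simp [Matrix.zero_mulVec]
  | cons i s hi ih => simp [Finset.sum_cons, add_mulVec, ih]

lemma mulVec_sum' {p q : ℕ} {ι : Type*} (M : Matrix (Fin p) (Fin q) ℝ) (s : Finset ι)
    (v : ι → Fin q → ℝ) : M *ᵥ (∑ i ∈ s, v i) = ∑ i ∈ s, M *ᵥ v i := by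
  induction s using Finset.cons_induction with
  | empty => simp [Matrix.mulVec_zero]
  | cons i s hi ih => simp [Finset.sum_cons, mulVec_add, ih]

lemma dot_BC {p : ℕ} (B C : Matrix (Fin n) (Fin p) ℝ) (x y : Fin p → ℝ) :
    (B *ᵥ x) ⬝ᵥ (C *ᵥ y) = ((Cᵀ * B) *ᵥ x) ⬝ᵥ y := by
  rw [dotProduct_mulVec, ← mulVec_transpose C, mulVec_mulVec]

section proj
variable {m : ℕ} {A : Matrix (Fin n) (Fin n) ℝ} {Z : Matrix (Fin n) (Fin m) ℝ}

lemma P0_fix (hA : A.PosDef) (hZ : LinearIndependent ℝ Zᵀ) (β : Fin m → ℝ) :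
    (Z * (Zᵀ * A * Z)⁻¹ * Zᵀ * A) *ᵥ (Z *ᵥ β) = Z *ᵥ β := by
  have hE : (Zᵀ * A * Z).PosDef := E_posDef hA hZ
  have hdet : IsUnit (Zᵀ * A * Z).det := isUnit_iff_ne_zero.mpr hE.det_pos.ne'
  have h : Z * (Zᵀ * A * Z)⁻¹ * Zᵀ * A * Z = Z := by
    calc Z * (Zᵀ * A * Z)⁻¹ * Zᵀ * A * Z
        = Z * ((Zᵀ * A * Z)⁻¹ * (Zᵀ * A * Z)) := by
          simp only [Matrix.mul_assoc]
      _ = Z := by rw [Matrix.nonsing_inv_mul _ hdet, Matrix.mul_one]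
  rw [mulVec_mulVec, h]

lemma P0_contract (hA : A.PosDef) (hZ : LinearIndependent ℝ Zᵀ) (U : Fin n → ℝ) :
    (A *ᵥ ((Z * (Zᵀ * A * Z)⁻¹ * Zᵀ * A) *ᵥ U)) ⬝ᵥ ((Z * (Zᵀ * A * Z)⁻¹ * Zᵀ * A) *ᵥ U)
      ≤ (A *ᵥ U) ⬝ᵥ U := by
  set E := Zᵀ * A * Z with hEdef
  set P := Z * E⁻¹ * Zᵀ * A with hPdef
  have hE : E.PosDef := E_posDef hA hZ
  have hdet : IsUnit E.det := isUnit_iff_ne_zero.mpr hE.det_pos.ne'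
  have hAs : Aᵀ = A := by simpa [conjTranspose_eq_transpose_of_trivial] using hA.1.eq
  have hEs : Eᵀ = E := by
    rw [hEdef, transpose_mul, transpose_mul, transpose_transpose, hAs, Matrix.mul_assoc]
  have hEis : (E⁻¹)ᵀ = E⁻¹ := by rw [Matrix.transpose_nonsing_inv, hEs]
  have hPT : Pᵀ = A * Z * E⁻¹ * Zᵀ := by
    rw [hPdef]
    simp only [transpose_mul, transpose_transpose, hAs, hEis, Matrix.mul_assoc]
  have hmat : Pᵀ * A * P = A * P := by
    rw [hPT, hPdef]
    calc A * Z * E⁻¹ * Zᵀ * A * (Z * E⁻¹ * Zᵀ * A)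
        = A * Z * (E⁻¹ * (Zᵀ * A * Z) * E⁻¹) * Zᵀ * A := by
          simp only [Matrix.mul_assoc]
      _ = A * Z * E⁻¹ * Zᵀ * A := by
          rw [← hEdef, Matrix.mul_assoc (E⁻¹) E (E⁻¹), Matrix.mul_nonsing_inv _ hdet,
            Matrix.mul_one]
      _ = A * (Z * E⁻¹ * Zᵀ * A) := by simp only [Matrix.mul_assoc]
  have hQ : (A *ᵥ (P *ᵥ U)) ⬝ᵥ (P *ᵥ U) = (A *ᵥ U) ⬝ᵥ (P *ᵥ U) := by
    rw [mulVec_mulVec, dot_BC,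
      show Pᵀ * (A * P) = Pᵀ * A * P from (Matrix.mul_assoc _ _ _).symm, hmat,
      ← mulVec_mulVec]
    exact symm_dot hA.1 (P *ᵥ U) U
  have hd0 : 0 ≤ (A *ᵥ U) ⬝ᵥ (P *ᵥ U) := hQ ▸ q_nonneg hA.posSemidef (P *ᵥ U)
  have hcs := q_cs hA.posSemidef U (P *ᵥ U)
  have hQU : 0 ≤ (A *ᵥ U) ⬝ᵥ U := q_nonneg hA.posSemidef U
  by_cases hz : (A *ᵥ U) ⬝ᵥ (P *ᵥ U) = 0
  · rw [hQ, hz]; exact hQU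
  · have hpos : 0 < (A *ᵥ U) ⬝ᵥ (P *ᵥ U) := lt_of_le_of_ne hd0 (Ne.symm hz)
    rw [hQ]
    nlinarith [hcs, hQ, hpos]

end proj


set_option maxHeartbeats 1600000 in
/-- Stable decomposition for GenEO with inexact coarse solve: under the
partition of unity, the `k₀`-bound, the GenEO bound with constant `k₁ τ`, the coarse-space
inclusion `range(R_jᵀ D_j π̃_j) ⊆ V₀` and `μ′ ⟨Ẽ u, u⟩ ≤ ⟨E u, u⟩`, for every `U` there
exist `U₀` and `U_i := D_i (I − π̃_i) R_i U` with
`U = Z U₀ + (I − P̃₀) ∑ R_iᵀ U_i` and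
`c_T (⟨Ẽ U₀, U₀⟩ + ∑ ⟨R_i A R_iᵀ U_i, U_i⟩) ≤ ⟨A U, U⟩`, where
`c_T = μ′ / ((1 + ε_A √(k₀ k₁ τ))² + μ′ k₁ τ)` and `ε_A = ‖P₀ − P̃₀‖_A`. -/
theorem stmt8 {n m N : ℕ} (A : Matrix (Fin n) (Fin n) ℝ) (hA : A.PosDef)
    (Z : Matrix (Fin n) (Fin m) ℝ) (hZ : LinearIndependent ℝ Zᵀ)
    (Et : Matrix (Fin m) (Fin m) ℝ) (hEt : Et.PosDef)
    (nd : Fin N → ℕ)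
    (R : ∀ i : Fin N, Matrix (Fin (nd i)) (Fin n) ℝ)
    (D : ∀ i : Fin N, Matrix (Fin (nd i)) (Fin (nd i)) ℝ)
    (hD : ∀ i, (D i).IsDiag)
    (k₀ k₁ τ μ' : ℝ) (hk₀ : 0 < k₀) (hk₁ : 0 < k₁) (hτ : 0 < τ) (hμ' : 0 < μ')
    (hPOU : ∑ i, (R i)ᵀ * D i * R i = (1 : Matrix (Fin n) (Fin n) ℝ))
    (hk₀bound : ∀ U : ∀ i : Fin N, Fin (nd i) → ℝ,
      (A *ᵥ (∑ i, (R i)ᵀ *ᵥ U i)) ⬝ᵥ (∑ i, (R i)ᵀ *ᵥ U i)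
        ≤ k₀ * ∑ i, (A *ᵥ ((R i)ᵀ *ᵥ U i)) ⬝ᵥ ((R i)ᵀ *ᵥ U i))
    (π : ∀ j : Fin N, Matrix (Fin (nd j)) (Fin (nd j)) ℝ)
    (hGenEO : ∀ U : Fin n → ℝ,
      ∑ j, ((R j * A * (R j)ᵀ) *ᵥ ((D j) *ᵥ ((1 - π j) *ᵥ ((R j) *ᵥ U)))) ⬝ᵥ
          ((D j) *ᵥ ((1 - π j) *ᵥ ((R j) *ᵥ U)))
        ≤ k₁ * τ * ((A *ᵥ U) ⬝ᵥ U))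
    (hπV₀ : ∀ j (v : Fin (nd j) → ℝ),
      ((R j)ᵀ * D j * π j) *ᵥ v ∈ Set.range (fun β : Fin m → ℝ => Z *ᵥ β))
    (hEμ' : ∀ u : Fin m → ℝ, μ' * ((Et *ᵥ u) ⬝ᵥ u) ≤ ((Zᵀ * A * Z) *ᵥ u) ⬝ᵥ u)
    (εA cT : ℝ)
    (hεA : εA = aOpNorm A (Z * (Zᵀ * A * Z)⁻¹ * Zᵀ * A - Z * Et⁻¹ * Zᵀ * A))
    (hcT : cT = μ' / ((1 + εA * Real.sqrt (k₀ * k₁ * τ)) ^ 2 + μ' * k₁ * τ)) :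
    ∀ U : Fin n → ℝ, ∃ U₀ : Fin m → ℝ,
      U = Z *ᵥ U₀ + (1 - Z * Et⁻¹ * Zᵀ * A) *ᵥ
            (∑ i, (R i)ᵀ *ᵥ ((D i) *ᵥ ((1 - π i) *ᵥ ((R i) *ᵥ U))))
      ∧ cT * ((Et *ᵥ U₀) ⬝ᵥ U₀
            + ∑ i, ((R i * A * (R i)ᵀ) *ᵥ ((D i) *ᵥ ((1 - π i) *ᵥ ((R i) *ᵥ U)))) ⬝ᵥ
                ((D i) *ᵥ ((1 - π i) *ᵥ ((R i) *ᵥ U))))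
          ≤ (A *ᵥ U) ⬝ᵥ U := by

  intro U
  have hGen := hGenEO U
  have hk0 := hk₀bound (fun i => (D i) *ᵥ ((1 - π i) *ᵥ ((R i) *ᵥ U)))
  beta_reduce at hk0
  set W := ∑ i, (R i)ᵀ *ᵥ ((D i) *ᵥ ((1 - π i) *ᵥ ((R i) *ᵥ U))) with hWdef
  set s := (A *ᵥ U) ⬝ᵥ U with hsdef
  set a := ∑ i, ((R i * A * (R i)ᵀ) *ᵥ ((D i) *ᵥ ((1 - π i) *ᵥ ((R i) *ᵥ U)))) ⬝ᵥ
      ((D i) *ᵥ ((1 - π i) *ᵥ ((R i) *ᵥ U))) with hadef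
  set P0 := Z * (Zᵀ * A * Z)⁻¹ * Zᵀ * A with hP0def
  set Pt := Z * Et⁻¹ * Zᵀ * A with hPtdef
  -- per-term identity
  have hterm : ∀ i, ((R i * A * (R i)ᵀ) *ᵥ (D i *ᵥ ((1 - π i) *ᵥ (R i *ᵥ U)))) ⬝ᵥ
      (D i *ᵥ ((1 - π i) *ᵥ (R i *ᵥ U)))
      = (A *ᵥ ((R i)ᵀ *ᵥ (D i *ᵥ ((1 - π i) *ᵥ (R i *ᵥ U))))) ⬝ᵥ
        ((R i)ᵀ *ᵥ (D i *ᵥ ((1 - π i) *ᵥ (R i *ᵥ U)))) := by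
    intro i
    symm
    rw [mulVec_mulVec, dot_BC, transpose_transpose, ← Matrix.mul_assoc]
  -- bound on W
  have hWa : (A *ᵥ W) ⬝ᵥ W ≤ k₀ * a := by
    rw [hadef]
    refine hk0.trans (le_of_eq ?_)
    congr 1
    exact Finset.sum_congr rfl fun i _ => (hterm i).symm
  have ha' : a ≤ k₁ * τ * s := hGen
  have hs0 : 0 ≤ s := q_nonneg hA.posSemidef U
  have hQW : (A *ᵥ W) ⬝ᵥ W ≤ (k₀ * k₁ * τ) * s := by
    refine hWa.trans ?_
    have := mul_le_mul_of_nonneg_left ha' hk₀.le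
    nlinarith [this]
  -- decomposition of U
  have hsplit : U = W + ∑ i, ((R i)ᵀ * D i * π i) *ᵥ ((R i) *ᵥ U) := by
    conv_lhs => rw [← one_mulVec U, ← hPOU, sum_mulVec']
    rw [hWdef, ← Finset.sum_add_distrib]
    refine Finset.sum_congr rfl fun i _ => ?_
    have hx : D i *ᵥ ((1 - π i) *ᵥ (R i *ᵥ U)) + D i *ᵥ (π i *ᵥ (R i *ᵥ U))
        = D i *ᵥ (R i *ᵥ U) := by
      rw [← mulVec_add, sub_mulVec, one_mulVec, sub_add_cancel]
    calc ((R i)ᵀ * D i * R i) *ᵥ U = (R i)ᵀ *ᵥ (D i *ᵥ (R i *ᵥ U)) := by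
          rw [← mulVec_mulVec, ← mulVec_mulVec]
      _ = (R i)ᵀ *ᵥ (D i *ᵥ ((1 - π i) *ᵥ (R i *ᵥ U)))
          + (R i)ᵀ *ᵥ (D i *ᵥ (π i *ᵥ (R i *ᵥ U))) := by
          rw [← hx, mulVec_add]
      _ = (R i)ᵀ *ᵥ (D i *ᵥ ((1 - π i) *ᵥ (R i *ᵥ U)))
          + ((R i)ᵀ * D i * π i) *ᵥ (R i *ᵥ U) := by
          rw [show (R i)ᵀ *ᵥ (D i *ᵥ (π i *ᵥ (R i *ᵥ U)))
              = ((R i)ᵀ * D i * π i) *ᵥ (R i *ᵥ U) by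
            rw [mulVec_mulVec, mulVec_mulVec]]
  choose b hb using fun i => hπV₀ i ((R i) *ᵥ U)
  have hZβ : Z *ᵥ (∑ i, b i) = U - W := by
    rw [mulVec_sum']
    have : ∑ i, Z *ᵥ b i = ∑ i, ((R i)ᵀ * D i * π i) *ᵥ ((R i) *ᵥ U) :=
      Finset.sum_congr rfl fun i _ => hb i
    rw [this, eq_sub_iff_add_eq, add_comm]
    exact hsplit.symm
  set β := ∑ i, b i with hβdef
  set U₀ := β + Et⁻¹ *ᵥ (Zᵀ *ᵥ (A *ᵥ W)) with hU₀def
  have hPtW : Pt *ᵥ W = Z *ᵥ (Et⁻¹ *ᵥ (Zᵀ *ᵥ (A *ᵥ W))) := by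
    rw [hPtdef, ← mulVec_mulVec, ← mulVec_mulVec, ← mulVec_mulVec]
  have hZU₀ : Z *ᵥ U₀ = (U - W) + Pt *ᵥ W := by
    rw [hU₀def, mulVec_add, hZβ, hPtW]
  refine ⟨U₀, ?_, ?_⟩
  · rw [sub_mulVec, one_mulVec, hZU₀]
    abel
  · -- the energy estimate
    have hP0U : P0 *ᵥ U = (U - W) + P0 *ᵥ W := by
      conv_lhs => rw [show U = Z *ᵥ β + W by rw [hZβ]; abel]
      rw [mulVec_add, P0_fix hA hZ β, hZβ]
    have hZU₀' : Z *ᵥ U₀ = P0 *ᵥ U + (Pt *ᵥ W - P0 *ᵥ W) := by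
      rw [hZU₀, hP0U]
      abel
    have htri : Real.sqrt ((A *ᵥ (Z *ᵥ U₀)) ⬝ᵥ (Z *ᵥ U₀))
        ≤ Real.sqrt ((A *ᵥ (P0 *ᵥ U)) ⬝ᵥ (P0 *ᵥ U))
          + Real.sqrt ((A *ᵥ (Pt *ᵥ W - P0 *ᵥ W)) ⬝ᵥ (Pt *ᵥ W - P0 *ᵥ W)) := by
      rw [hZU₀']
      exact sqrt_q_triangle hA.posSemidef _ _
    have hQdiff : (A *ᵥ (Pt *ᵥ W - P0 *ᵥ W)) ⬝ᵥ (Pt *ᵥ W - P0 *ᵥ W)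
        = (A *ᵥ ((P0 - Pt) *ᵥ W)) ⬝ᵥ ((P0 - Pt) *ᵥ W) := by
      have h1 : Pt *ᵥ W - P0 *ᵥ W = -((P0 - Pt) *ᵥ W) := by
        rw [sub_mulVec]; abel
      rw [h1, mulVec_neg, neg_dotProduct, dotProduct_neg, neg_neg]
    have hdiffle : Real.sqrt ((A *ᵥ (Pt *ᵥ W - P0 *ᵥ W)) ⬝ᵥ (Pt *ᵥ W - P0 *ᵥ W))
        ≤ εA * Real.sqrt ((A *ᵥ W) ⬝ᵥ W) := by
      rw [hQdiff, hεA]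
      exact aNorm_mulVec_le hA (P0 - Pt) W
    have hP0le : Real.sqrt ((A *ᵥ (P0 *ᵥ U)) ⬝ᵥ (P0 *ᵥ U)) ≤ Real.sqrt s :=
      Real.sqrt_le_sqrt (P0_contract hA hZ U)
    have hWle : Real.sqrt ((A *ᵥ W) ⬝ᵥ W) ≤ Real.sqrt (k₀ * k₁ * τ) * Real.sqrt s := by
      have h1 := Real.sqrt_le_sqrt hQW
      rwa [Real.sqrt_mul (by positivity)] at h1
    have hε0 : 0 ≤ εA := hεA ▸ aOpNorm_nonneg hA _
    have hL : Real.sqrt ((A *ᵥ (Z *ᵥ U₀)) ⬝ᵥ (Z *ᵥ U₀))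
        ≤ (1 + εA * Real.sqrt (k₀ * k₁ * τ)) * Real.sqrt s := by
      have h2 : εA * Real.sqrt ((A *ᵥ W) ⬝ᵥ W)
          ≤ εA * (Real.sqrt (k₀ * k₁ * τ) * Real.sqrt s) :=
        mul_le_mul_of_nonneg_left hWle hε0
      calc Real.sqrt ((A *ᵥ (Z *ᵥ U₀)) ⬝ᵥ (Z *ᵥ U₀))
          ≤ Real.sqrt ((A *ᵥ (P0 *ᵥ U)) ⬝ᵥ (P0 *ᵥ U))
            + Real.sqrt ((A *ᵥ (Pt *ᵥ W - P0 *ᵥ W)) ⬝ᵥ (Pt *ᵥ W - P0 *ᵥ W)) := htri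
        _ ≤ Real.sqrt s + εA * (Real.sqrt (k₀ * k₁ * τ) * Real.sqrt s) :=
            add_le_add hP0le (hdiffle.trans h2)
        _ = (1 + εA * Real.sqrt (k₀ * k₁ * τ)) * Real.sqrt s := by ring
    have hQZU₀ : (A *ᵥ (Z *ᵥ U₀)) ⬝ᵥ (Z *ᵥ U₀)
        ≤ (1 + εA * Real.sqrt (k₀ * k₁ * τ)) ^ 2 * s := by
      have h0 := q_nonneg hA.posSemidef (Z *ᵥ U₀)
      have h1 := Real.sq_sqrt h0
      have h2 := Real.sq_sqrt hs0
      have h3 := Real.sqrt_nonneg ((A *ᵥ (Z *ᵥ U₀)) ⬝ᵥ (Z *ᵥ U₀))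
      have h4 := Real.sqrt_nonneg s
      nlinarith [hL]
    have hEQ : ((Zᵀ * A * Z) *ᵥ U₀) ⬝ᵥ U₀ = (A *ᵥ (Z *ᵥ U₀)) ⬝ᵥ (Z *ᵥ U₀) := by
      symm
      rw [mulVec_mulVec, dot_BC, ← Matrix.mul_assoc]
    have hEbound : μ' * ((Et *ᵥ U₀) ⬝ᵥ U₀)
        ≤ (1 + εA * Real.sqrt (k₀ * k₁ * τ)) ^ 2 * s := by
      refine (hEμ' U₀).trans ?_
      rw [hEQ]
      exact hQZU₀
    have hdenom : 0 < (1 + εA * Real.sqrt (k₀ * k₁ * τ)) ^ 2 + μ' * k₁ * τ := by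
      have h1 : 0 < μ' * k₁ * τ := by positivity
      nlinarith [sq_nonneg (1 + εA * Real.sqrt (k₀ * k₁ * τ))]
    rw [hcT, div_mul_eq_mul_div, div_le_iff₀ hdenom]
    have hμa : μ' * a ≤ μ' * (k₁ * τ * s) := mul_le_mul_of_nonneg_left ha' hμ'.le
    nlinarith [hEbound, hμa]
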